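/- Let $a$ be a positive integer. The equation $x^2 + xy + y^2 = a$ has integer solutions if and only if for every prime $p$ dividing $a$ with $p \ne 3$ and $p \not\equiv 1 \pmod 6$, the exact power of $p$ dividing $a$ is even. -/

import Mathlib

-- Lemma A: no root of t^2+t+1 in ZMod p when p % 3 = 2
lemma aux12_no_root (p : ℕ) [hp : Fact p.Prime] (h : p % 3 = 2) (t : ZMod p) :
    t ^ 2 + t + 1 ≠ 0 := by
  intro h0
  have hp1 : (1 : ZMod p) ≠ 0 := one_ne_zero
  have ht1 : t ≠ 1 := by
    rintro rfl
    have h3 : ((3 : ℕ) : ZMod p) = 0 := by push_cast; linear_combination h0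
    rw [ZMod.natCast_eq_zero_iff] at h3
    have := (Nat.prime_dvd_prime_iff_eq hp.out Nat.prime_three).mp h3
    omega
  have ht3 : t ^ 3 = 1 := by linear_combination (t - 1) * h0
  have htne : t * t ^ 2 = 1 := by linear_combination ht3
  set u : (ZMod p)ˣ := ⟨t, t ^ 2, htne, by linear_combination htne⟩ with hu
  have hu3 : u ^ 3 = 1 := by ext; push_cast [hu]; exact ht3
  have hord : orderOf u ∣ 3 := orderOf_dvd_of_pow_eq_one hu3
  have hune : u ≠ 1 := by
    intro hh; apply ht1; have := congrArg (Units.val) hh; simpa [hu] using this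
  have h3 : orderOf u = 3 := by
    rcases (Nat.Prime.eq_one_or_self_of_dvd Nat.prime_three _ hord) with h | h
    · exact absurd (orderOf_eq_one_iff.mp h) hune
    · exact h
  have hcard : orderOf u ∣ Fintype.card (ZMod p)ˣ := orderOf_dvd_card
  rw [ZMod.card_units_eq_totient, Nat.totient_prime hp.out, h3] at hcard
  have hp2 : 2 ≤ p := hp.out.two_le
  omega

-- Lemma B: inert prime divides both coordinates
lemma aux12_dvd (p : ℕ) [hp : Fact p.Prime] (h : p % 3 = 2) {x y : ℤ}
    (hd : (p : ℤ) ∣ x ^ 2 + x * y + y ^ 2) : (p : ℤ) ∣ x ∧ (p : ℤ) ∣ y := by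
  have h0 : ((x : ZMod p)) ^ 2 + (x : ZMod p) * (y : ZMod p) + (y : ZMod p) ^ 2 = 0 := by
    have := (ZMod.intCast_zmod_eq_zero_iff_dvd _ p).mpr hd
    push_cast at this
    linear_combination this
  have hy : (y : ZMod p) = 0 := by
    by_contra hy
    apply aux12_no_root p h ((x : ZMod p) / (y : ZMod p))
    field_simp
    linear_combination h0
  have hx : (x : ZMod p) = 0 := by
    rw [hy] at h0
    have : ((x : ZMod p)) ^ 2 = 0 := by linear_combination h0
    exact (pow_eq_zero_iff two_ne_zero).mp this
  exact ⟨(ZMod.intCast_zmod_eq_zero_iff_dvd _ p).mp hx,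
    (ZMod.intCast_zmod_eq_zero_iff_dvd _ p).mp hy⟩

def MyRep (n : ℤ) : Prop := ∃ x y : ℤ, x ^ 2 + x * y + y ^ 2 = n

lemma aux12_mul {m n : ℤ} (hm : MyRep m) (hn : MyRep n) : MyRep (m * n) := by
  obtain ⟨x, y, hxy⟩ := hm
  obtain ⟨u, v, huv⟩ := hn
  exact ⟨x * u - y * v, x * v + y * u + y * v, by rw [← hxy, ← huv]; ring⟩

lemma aux12_pos {x y : ℤ} (h : ¬ (x = 0 ∧ y = 0)) : 0 < x ^ 2 + x * y + y ^ 2 := by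
  rcases eq_or_ne y 0 with rfl | hy
  · have hx : x ≠ 0 := by tauto
    have : 0 < x ^ 2 := by positivity
    nlinarith
  · have : 0 < y ^ 2 := by positivity
    nlinarith [sq_nonneg (2 * x + y)]

set_option maxHeartbeats 800000 in
-- Thue-style lemma: primes ≡ 1 mod 6 are represented
lemma aux12_prime_rep (p : ℕ) [hp : Fact p.Prime] (h : p % 6 = 1) : MyRep (p : ℤ) := by
  have hp7 : 7 ≤ p := by
    have := hp.out.two_le
    rcases Nat.lt_or_ge p 7 with h7 | h7
    · interval_cases p <;> simp_all
    · exact h7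
  -- get t : ZMod p with t^2 + t + 1 = 0
  have hcard : (3 : ℕ) ∣ Fintype.card (ZMod p)ˣ := by
    rw [ZMod.card_units_eq_totient, Nat.totient_prime hp.out]; omega
  obtain ⟨u, hu⟩ := exists_prime_orderOf_dvd_card (G := (ZMod p)ˣ) 3 hcard
  set t : ZMod p := (u : ZMod p) with htdef
  have ht3 : t ^ 3 = 1 := by
    have : u ^ 3 = 1 := by rw [← hu]; exact pow_orderOf_eq_one u
    have := congrArg (Units.val) this
    push_cast at this; exact this
  have ht1 : t ≠ 1 := by
    intro hh
    have : u = 1 := Units.ext (by simpa [htdef] using hh)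
    rw [this] at hu; simp at hu
  have ht : t ^ 2 + t + 1 = 0 := by
    have hfac : (t - 1) * (t ^ 2 + t + 1) = 0 := by linear_combination ht3
    rcases mul_eq_zero.mp hfac with hc | hc
    · exact absurd (by linear_combination hc) ht1
    · exact hc
  -- Thue / pigeonhole
  set n := Nat.sqrt p with hn
  have hn2 : n * n < p := by
    rcases Nat.lt_or_ge (n * n) p with h' | h'
    · exact h'
    · exfalso
      have heq : n * n = p := le_antisymm (by simpa [pow_two] using Nat.sqrt_le' p) h'
      exact (Nat.Prime.prime hp.out).not_isSquare ⟨n, heq.symm⟩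
  have hpn : p < (n + 1) * (n + 1) := by simpa [pow_two] using Nat.lt_succ_sqrt' p
  classical
  have hmaps : ∀ c ∈ Finset.range (n+1) ×ˢ Finset.range (n+1),
      ((c.1 : ZMod p) - t * (c.2 : ZMod p)) ∈ (Finset.univ : Finset (ZMod p)) := by
    intros; exact Finset.mem_univ _
  have hlt : (Finset.univ : Finset (ZMod p)).card
      < ((Finset.range (n+1)) ×ˢ (Finset.range (n+1))).card := by
    rw [Finset.card_univ, ZMod.card, Finset.card_product, Finset.card_range]
    exact hpn
  obtain ⟨c1, hc1, c2, hc2, hne, heq⟩ :=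
    Finset.exists_ne_map_eq_of_card_lt_of_maps_to hlt hmaps
  simp only [Finset.mem_product, Finset.mem_range] at hc1 hc2
  set x : ℤ := (c1.1 : ℤ) - c2.1 with hx
  set y : ℤ := (c1.2 : ℤ) - c2.2 with hy
  have hxy0 : ¬ (x = 0 ∧ y = 0) := by
    rintro ⟨h1, h2⟩
    apply hne
    have : c1.1 = c2.1 := by omega
    have : c1.2 = c2.2 := by omega
    exact Prod.ext (by omega) (by omega)
  have hmod : (x : ZMod p) = t * (y : ZMod p) := by
    simp only [hx, hy]
    push_cast
    linear_combination heq
  have hdvd : (p : ℤ) ∣ x ^ 2 + x * y + y ^ 2 := by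
    have : ((x ^ 2 + x * y + y ^ 2 : ℤ) : ZMod p) = 0 := by
      push_cast
      rw [hmod]
      linear_combination ((y : ZMod p)) ^ 2 * ht
    exact (ZMod.intCast_zmod_eq_zero_iff_dvd _ p).mp this
  have hpos : 0 < x ^ 2 + x * y + y ^ 2 := aux12_pos hxy0
  have hxb : x ^ 2 ≤ (n : ℤ) * n := by
    have h1 : -(n : ℤ) ≤ x := by simp only [hx]; push_cast; omega
    have h2 : x ≤ (n : ℤ) := by simp only [hx]; push_cast; omega
    nlinarith
  have hyb : y ^ 2 ≤ (n : ℤ) * n := by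
    have h1 : -(n : ℤ) ≤ y := by simp only [hy]; push_cast; omega
    have h2 : y ≤ (n : ℤ) := by simp only [hy]; push_cast; omega
    nlinarith
  have hub : x ^ 2 + x * y + y ^ 2 < 3 * p := by
    have hnp : ((n : ℤ) * n) < p := by exact_mod_cast hn2
    nlinarith [sq_nonneg (x - y), sq_nonneg (x + y)]
  -- so the value is p or 2p
  obtain ⟨k, hk⟩ := hdvd
  have hp0 : (0:ℤ) < (p:ℤ) := by exact_mod_cast hp.out.pos
  have h1 : 0 < (p:ℤ) * k := hk ▸ hpos
  have h2 : (p:ℤ) * k < 3 * p := hk ▸ hub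
  have hkpos : 0 < k := by
    rcases mul_pos_iff.mp h1 with ⟨_, hh⟩ | ⟨hh, _⟩
    · exact hh
    · linarith
  have hklt : k < 3 := lt_of_mul_lt_mul_left (by linarith) hp0.le
  have hk12 : k = 1 ∨ k = 2 := by omega
  rcases hk12 with rfl | rfl
  · exact ⟨x, y, by rw [hk]; ring⟩
  · exfalso
    have h2d : ((2:ℕ):ℤ) ∣ x ^ 2 + x * y + y ^ 2 := ⟨(p:ℤ), by rw [hk]; push_cast; ring⟩
    obtain ⟨hdx, hdy⟩ := aux12_dvd 2 (by norm_num) h2d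
    obtain ⟨x', hx'⟩ := hdx
    obtain ⟨y', hy'⟩ := hdy
    rw [hx', hy'] at hk
    have hpd : ((2:ℕ):ℤ) ∣ (p:ℤ) :=
      ⟨x' ^ 2 + x' * y' + y' ^ 2, by push_cast at hk ⊢; linarith⟩
    have : 2 ∣ p := Int.natCast_dvd_natCast.mp hpd
    omega

lemma aux12_even (p : ℕ) (hp : p.Prime) (h3 : p % 3 = 2) :
    ∀ a : ℕ, 0 < a → MyRep (a : ℤ) → Even (a.factorization p) := by
  intro a
  induction a using Nat.strong_induction_on with
  | _ a ih =>
    rintro ha ⟨x, y, hxy⟩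
    by_cases hpa : p ∣ a
    · haveI : Fact p.Prime := ⟨hp⟩
      have hd : (p : ℤ) ∣ x ^ 2 + x * y + y ^ 2 := hxy ▸ Int.natCast_dvd_natCast.mpr hpa
      obtain ⟨hdx, hdy⟩ := aux12_dvd p h3 hd
      obtain ⟨x', hx'⟩ := hdx
      obtain ⟨y', hy'⟩ := hdy
      have hsq : ((p : ℤ)) ^ 2 ∣ (a : ℤ) :=
        ⟨x' ^ 2 + x' * y' + y' ^ 2, by rw [← hxy, hx', hy']; ring⟩
      have hsqn : p ^ 2 ∣ a := by exact_mod_cast hsq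
      obtain ⟨b, hb⟩ := hsqn
      have hp2 : 2 ≤ p := hp.two_le
      have hbpos : 0 < b := by
        rcases Nat.eq_zero_or_pos b with rfl | hh
        · omega
        · exact hh
      have h4b : 4 * b ≤ p ^ 2 * b := Nat.mul_le_mul_right b (by nlinarith)
      have hba : b < a := by rw [hb]; linarith
      have hrep : MyRep (b : ℤ) := by
        refine ⟨x', y', ?_⟩
        have hcan : (p : ℤ) ^ 2 * (x' ^ 2 + x' * y' + y' ^ 2) = (p : ℤ) ^ 2 * (b : ℤ) := by
          have h' : (p : ℤ) ^ 2 * (x' ^ 2 + x' * y' + y' ^ 2) = (a : ℤ) := by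
            rw [← hxy, hx', hy']; ring
          rw [h', hb]; push_cast; ring
        have hpne : ((p : ℤ)) ^ 2 ≠ 0 := by positivity
        exact mul_left_cancel₀ hpne hcan
      obtain ⟨c, hc⟩ := ih b hba hbpos hrep
      refine ⟨c + 1, ?_⟩
      rw [hb, Nat.factorization_mul (by positivity) (by omega),
        hp.factorization_pow, Finsupp.add_apply, Finsupp.single_apply]
      simp only [eq_self_iff_true, if_true]
      omega
    · simp [Nat.factorization_eq_zero_of_not_dvd hpa]

lemma aux12_rep : ∀ a : ℕ, 0 < a →
    (∀ p : ℕ, p.Prime → p ∣ a → p ≠ 3 → p % 6 ≠ 1 → Even (a.factorization p)) →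
    MyRep (a : ℤ) := by
  intro a
  induction a using Nat.strong_induction_on with
  | _ a ih =>
    intro ha H
    rcases eq_or_lt_of_le (show 1 ≤ a from ha) with h1 | h1
    · exact ⟨1, 0, by rw [← h1]; norm_num⟩
    set p := a.minFac with hpdef
    have hane : a ≠ 1 := by omega
    have hp : p.Prime := Nat.minFac_prime hane
    haveI : Fact p.Prime := ⟨hp⟩
    have hpa : p ∣ a := Nat.minFac_dvd a
    have hp2 : 2 ≤ p := hp.two_le
    by_cases hcase : p = 3 ∨ p % 6 = 1
    · obtain ⟨b, hb⟩ := hpa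
      have hbpos : 0 < b := by
        rcases Nat.eq_zero_or_pos b with rfl | hh
        · omega
        · exact hh
      have h2b : 2 * b ≤ p * b := Nat.mul_le_mul_right b hp2
      have hba : b < a := by rw [hb]; linarith
      have hrepp : MyRep (p : ℤ) := by
        rcases hcase with h3 | h6
        · exact ⟨1, 1, by rw [h3]; norm_num⟩
        · exact aux12_prime_rep p h6
      have hrepb : MyRep (b : ℤ) := by
        refine ih b hba hbpos ?_
        intro q hq hqb hq3 hq6
        have hqp : q ≠ p := by
          rintro rfl
          rcases hcase with h | h
          · exact hq3 h
          · exact hq6 h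
        have hfac : b.factorization q = a.factorization q := by
          rw [hb, Nat.factorization_mul (by omega) (by omega), Finsupp.add_apply,
            hp.factorization, Finsupp.single_apply, if_neg (Ne.symm hqp)]
          omega
        rw [hfac]
        exact H q hq (hb ▸ Dvd.dvd.mul_left hqb p) hq3 hq6
      have : MyRep ((p : ℤ) * (b : ℤ)) := aux12_mul hrepp hrepb
      rwa [← Nat.cast_mul, ← hb] at this
    · push_neg at hcase
      obtain ⟨hp3, hp6⟩ := hcase
      have heven : Even (a.factorization p) := H p hp hpa hp3 hp6
      have h1f : 1 ≤ a.factorization p :=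
        (Nat.Prime.pow_dvd_iff_le_factorization hp (by omega)).mp (by simpa using hpa)
      have h2f : 2 ≤ a.factorization p := by
        obtain ⟨c, hc⟩ := heven; omega
      have hsq : p ^ 2 ∣ a := (Nat.Prime.pow_dvd_iff_le_factorization hp (by omega)).mpr h2f
      obtain ⟨b, hb⟩ := hsq
      have hbpos : 0 < b := by
        rcases Nat.eq_zero_or_pos b with rfl | hh
        · omega
        · exact hh
      have h4b : 4 * b ≤ p ^ 2 * b := Nat.mul_le_mul_right b (by nlinarith)
      have hba : b < a := by rw [hb]; linarith
      have hrepb : MyRep (b : ℤ) := by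
        refine ih b hba hbpos ?_
        intro q hq hqb hq3 hq6
        have hfac : a.factorization q = (p ^ 2).factorization q + b.factorization q := by
          rw [hb, Nat.factorization_mul (by positivity) (by omega), Finsupp.add_apply]
        have hH : Even (a.factorization q) := by
          rcases eq_or_ne q p with rfl | hqp
          · exact heven
          · exact H q hq (hb ▸ Dvd.dvd.mul_left hqb (p ^ 2)) hq3 hq6
        rcases eq_or_ne q p with rfl | hqp
        · have hfp : (p ^ 2).factorization p = 2 := by
            rw [hp.factorization_pow]; simp
          obtain ⟨c, hc⟩ := hH
          rw [hfac, hfp] at hc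
          exact ⟨c - 1, by omega⟩
        · have hfp : (p ^ 2).factorization q = 0 := by
            rw [hp.factorization_pow, Finsupp.single_apply, if_neg (Ne.symm hqp)]
          obtain ⟨c, hc⟩ := hH
          rw [hfac, hfp] at hc
          exact ⟨c, by omega⟩
      have hrepp2 : MyRep ((p : ℤ) ^ 2) := ⟨(p : ℤ), 0, by ring⟩
      have : MyRep ((p : ℤ) ^ 2 * (b : ℤ)) := aux12_mul hrepp2 hrepb
      rwa [show ((p : ℤ) ^ 2 * (b : ℤ)) = ((p ^ 2 * b : ℕ) : ℤ) by push_cast; ring, ← hb] at this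

theorem stmt_12 (a : ℕ) (ha : 0 < a) :
    (∃ x y : ℤ, x ^ 2 + x * y + y ^ 2 = (a : ℤ)) ↔
    (∀ p : ℕ, p.Prime → p ∣ a → p ≠ 3 → p % 6 ≠ 1 →
      Even (a.factorization p)) := by
  constructor
  · intro hrep p hp hpa hp3 hp6
    have h30 : p % 3 ≠ 0 := fun hh =>
      hp3 ((Nat.prime_dvd_prime_iff_eq Nat.prime_three hp).mp (Nat.dvd_of_mod_eq_zero hh)).symm
    have h3 : p % 3 = 2 := by
      rcases hp.eq_two_or_odd' with rfl | hodd
      · rfl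
      · have : p % 2 = 1 := Nat.odd_iff.mp hodd
        omega
    exact aux12_even p hp h3 a ha hrep
  · exact aux12_rep a ha
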